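/- Let G : B_ρ(Ψ̄) → V be defined by G(Ψ) = Ψ − L⁻¹ N(Ψ) where L is a fixed bounded invertible linear operator and N is C¹ with ‖∂N(Ψ₁) − ∂N(Ψ₂)‖_{L(V)} ≤ C‖Ψ₁ − Ψ₂‖ on B_ρ(Ψ̄), L = ∂N(Ψ̄), and ‖L⁻¹ N(Ψ̄)‖ ≤ Ĉ h^γ. Then for ρ and h sufficiently small (ρ ≤ 1/(2Ĉ′) and Ĉ(h^γ + ρ²) ≤ ρ with appropriate constants), G maps B_ρ(Ψ̄) into itself and is a strict contraction, hence N has a unique zero in B_ρ(Ψ̄). -/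

import Mathlib

/-- (Banach fixed point / Newton–Kantorovich argument for the
discrete von Kármán problem.) `V` is a Banach space, `N` the (discrete) nonlinear
residual map with derivative `DN`, `L = ∂N(Ψ̄)` a bounded invertible linear operator,
`DN` Lipschitz with constant `Clip`, and residual bound `‖L⁻¹ N(Ψ̄)‖ ≤ Ĉ h^γ`.
For `ρ` and `h` sufficiently small (in particular `Ĉ h^γ ≤ ρ/2`), the map
`G(Ψ) = Ψ − L⁻¹ N(Ψ)` maps the closed ball `B_ρ(Ψ̄)` into itself and is a strict
contraction there; hence `N` has a unique zero in `B_ρ(Ψ̄)`. -/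
theorem stmt_18 {V : Type*} [NormedAddCommGroup V] [NormedSpace ℝ V] [CompleteSpace V]
    (Ψbar : V) (N : V → V) (DN : V → (V →L[ℝ] V)) (L : V ≃L[ℝ] V)
    (Clip Chat γ h : ℝ) (hClip : 0 < Clip) (hChat : 0 < Chat) (hγ : 0 < γ) (hh : 0 < h)
    (hDN : ∀ Ψ : V, HasFDerivAt N (DN Ψ) Ψ)
    (hL : (L : V →L[ℝ] V) = DN Ψbar)
    (hlip : ∀ Ψ₁ Ψ₂ : V, ‖DN Ψ₁ - DN Ψ₂‖ ≤ Clip * ‖Ψ₁ - Ψ₂‖)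
    (hres : ‖(L.symm : V →L[ℝ] V) (N Ψbar)‖ ≤ Chat * h ^ γ) :
    ∃ ρ₀ > 0, ∀ ρ : ℝ, 0 < ρ → ρ ≤ ρ₀ → Chat * h ^ γ ≤ ρ / 2 →
      -- G maps the closed ball into itself
      (∀ Ψ ∈ Metric.closedBall Ψbar ρ,
        (Ψ - (L.symm : V →L[ℝ] V) (N Ψ)) ∈ Metric.closedBall Ψbar ρ) ∧
      -- G is a strict contraction on the closed ball
      (∃ k : ℝ, 0 ≤ k ∧ k < 1 ∧
        ∀ Ψ₁ ∈ Metric.closedBall Ψbar ρ, ∀ Ψ₂ ∈ Metric.closedBall Ψbar ρ,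
          ‖(Ψ₁ - (L.symm : V →L[ℝ] V) (N Ψ₁)) - (Ψ₂ - (L.symm : V →L[ℝ] V) (N Ψ₂))‖ ≤
            k * ‖Ψ₁ - Ψ₂‖) ∧
      -- hence N has a unique zero in the closed ball
      (∃! Ψ : V, Ψ ∈ Metric.closedBall Ψbar ρ ∧ N Ψ = 0) := by
  set Li : V →L[ℝ] V := (L.symm : V →L[ℝ] V) with hLi
  set M : ℝ := ‖Li‖ with hM
  set K : ℝ := M * Clip + 1 with hK
  have hM0 : 0 ≤ M := norm_nonneg _
  have hK0 : 0 < K := by positivity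
  refine ⟨1 / (2 * K), by positivity, fun ρ hρ hρ₀ hsmall => ?_⟩
  set G : V → V := fun Ψ => Ψ - Li (N Ψ) with hG
  -- contraction estimate
  have hcontr : ∀ Ψ₁ ∈ Metric.closedBall Ψbar ρ, ∀ Ψ₂ ∈ Metric.closedBall Ψbar ρ,
      ‖G Ψ₁ - G Ψ₂‖ ≤ (1/2 : ℝ) * ‖Ψ₁ - Ψ₂‖ := by
    intro Ψ₁ h₁ Ψ₂ h₂
    have hconv : Convex ℝ (Metric.closedBall Ψbar ρ) := convex_closedBall _ _
    refine hconv.norm_image_sub_le_of_norm_hasFDerivWithin_le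
      (f' := fun x => ContinuousLinearMap.id ℝ V - Li.comp (DN x)) ?_ ?_ h₂ h₁
    · intro x hx
      exact ((hasFDerivAt_id x).sub (Li.hasFDerivAt.comp x (hDN x))).hasFDerivWithinAt
    · intro x hx
      have heq : ContinuousLinearMap.id ℝ V - Li.comp (DN x)
          = Li.comp ((DN Ψbar) - DN x) := by
        ext v
        simp [Li, ← hL]
      rw [heq]
      calc ‖Li.comp ((DN Ψbar) - DN x)‖ ≤ M * ‖DN Ψbar - DN x‖ :=
            Li.opNorm_comp_le _
        _ ≤ M * (Clip * ‖Ψbar - x‖) :=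
            mul_le_mul_of_nonneg_left (hlip _ _) hM0
        _ ≤ M * (Clip * ρ) := by
            have : ‖Ψbar - x‖ ≤ ρ := by
              rw [norm_sub_rev]
              simpa [dist_eq_norm] using hx
            exact mul_le_mul_of_nonneg_left
              (mul_le_mul_of_nonneg_left this hClip.le) hM0
        _ ≤ K * ρ := by
            rw [← mul_assoc]
            exact mul_le_mul_of_nonneg_right (by rw [hK]; linarith) hρ.le
        _ ≤ 1/2 := by
            have : K * ρ ≤ K * (1 / (2 * K)) :=
              mul_le_mul_of_nonneg_left hρ₀ hK0.le
            calc K * ρ ≤ K * (1 / (2 * K)) := this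
              _ = 1/2 := by field_simp
  have hbarmem : Ψbar ∈ Metric.closedBall Ψbar ρ := Metric.mem_closedBall_self hρ.le
  -- maps into
  have hmaps : ∀ Ψ ∈ Metric.closedBall Ψbar ρ, G Ψ ∈ Metric.closedBall Ψbar ρ := by
    intro Ψ hΨ
    have h1 : ‖G Ψ - G Ψbar‖ ≤ (1/2) * ‖Ψ - Ψbar‖ := hcontr Ψ hΨ Ψbar hbarmem
    have h2 : ‖G Ψbar - Ψbar‖ ≤ ρ / 2 := by
      have : G Ψbar - Ψbar = -(Li (N Ψbar)) := by simp [hG]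
      rw [this, norm_neg]
      exact hres.trans hsmall
    have h3 : ‖Ψ - Ψbar‖ ≤ ρ := by simpa [dist_eq_norm] using hΨ
    have : ‖G Ψ - Ψbar‖ ≤ ρ := by
      calc ‖G Ψ - Ψbar‖ ≤ ‖G Ψ - G Ψbar‖ + ‖G Ψbar - Ψbar‖ := by
              have := dist_triangle (G Ψ) (G Ψbar) Ψbar
              simpa [dist_eq_norm] using this
        _ ≤ (1/2) * ‖Ψ - Ψbar‖ + ρ/2 := add_le_add h1 h2
        _ ≤ (1/2) * ρ + ρ/2 := by nlinarith
        _ = ρ := by ring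
    simpa [dist_eq_norm] using this
  refine ⟨fun Ψ hΨ => hmaps Ψ hΨ, ⟨1/2, by norm_num, by norm_num, hcontr⟩, ?_⟩
  -- unique zero via Banach fixed point on the subtype
  set s := Metric.closedBall Ψbar ρ
  have hsc : IsClosed s := Metric.isClosed_closedBall
  haveI : CompleteSpace s := hsc.completeSpace_coe
  haveI : Nonempty s := ⟨⟨Ψbar, hbarmem⟩⟩
  set f : s → s := fun x => ⟨G x, hmaps x x.2⟩ with hf
  have hCW : ContractingWith (1/2 : NNReal) f := by
    constructor
    · exact_mod_cast (by norm_num : ((1:NNReal)/2 : ℝ) < 1)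
    · refine LipschitzWith.of_dist_le_mul fun x y => ?_
      have := hcontr x x.2 y y.2
      simpa [f, Subtype.dist_eq, dist_eq_norm] using this
  set Ψs := hCW.fixedPoint f with hΨs
  have hfix : f Ψs = Ψs := hCW.fixedPoint_isFixedPt
  have hGfix : G (Ψs : V) = (Ψs : V) := congrArg Subtype.val hfix
  have hNzero : N (Ψs : V) = 0 := by
    have h0 : Li (N (Ψs : V)) = 0 := by
      have := hGfix
      simp only [hG] at this
      have := sub_eq_self.mp this
      exact this
    have := congrArg L h0
    simpa [Li] using this
  refine ⟨(Ψs : V), ⟨Ψs.2, hNzero⟩, ?_⟩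
  intro y hy
  have hGy : G y = y := by simp [hG, hy.2]
  have := hcontr y hy.1 (Ψs : V) Ψs.2
  rw [hGy, hGfix] at this
  have : ‖y - (Ψs : V)‖ ≤ 0 := by linarith
  have : y - (Ψs : V) = 0 := by
    have := le_antisymm this (norm_nonneg _)
    exact norm_eq_zero.mp this
  exact sub_eq_zero.mp this
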